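/- Let X ⊂ ℝ^n be nonempty convex compact, Q symmetric positive definite, q > 0, C ∈ ℝ^{n×n}, c ∈ ℝ^n, and let x⋆(z) := argmin_{x∈X} [ q xᵀQx + 2(Cz + c)ᵀx ]. If the matrix M := [[qQ, −C],[−Cᵀ, qQ]] ∈ ℝ^{2n×2n} is symmetric positive definite, then x⋆ is a contraction in the Q-norm: there exists ε ∈ (0,1] such that ‖x⋆(v) − x⋆(w)‖_Q ≤ (1−ε) ‖v − w‖_Q for all v, w ∈ ℝ^n. (Lemma 6, statement 1.) -/

import Mathlib

open Matrix Filter Topology Finset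
open scoped Kronecker

noncomputable section

/-- Euclidean norm of a finitely-indexed real vector. -/
def eunorm {ι : Type*} [Fintype ι] (x : ι → ℝ) : ℝ := Real.sqrt (x ⬝ᵥ x)

/-- `S`-weighted norm `‖x‖_S = √(xᵀ S x)`. -/
def wnorm {ι : Type*} [Fintype ι] (S : Matrix ι ι ℝ) (x : ι → ℝ) : ℝ :=
  Real.sqrt (x ⬝ᵥ S.mulVec x)

/-- Quadratic cost `J(x,z) = q·xᵀQx + 2(Cz+c)ᵀx`. -/
def cost {n : ℕ} (Q C : Matrix (Fin n) (Fin n) ℝ) (qi : ℝ) (ci : Fin n → ℝ)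
    (x z : Fin n → ℝ) : ℝ :=
  qi * (x ⬝ᵥ Q.mulVec x) + 2 * ((C.mulVec z + ci) ⬝ᵥ x)

/-- `xst` is the optimal-response map: for every `z`, `xst z` minimizes the cost over `X`. -/
def IsOptResp {n : ℕ} (X : Set (Fin n → ℝ)) (Q C : Matrix (Fin n) (Fin n) ℝ)
    (qi : ℝ) (ci : Fin n → ℝ) (xst : (Fin n → ℝ) → (Fin n → ℝ)) : Prop :=
  ∀ z, xst z ∈ X ∧ ∀ y ∈ X, cost Q C qi ci (xst z) z ≤ cost Q C qi ci y z

/-- Stacked optimal responses `x⋆(z) = (x^{1⋆}(z^1);…;x^{N⋆}(z^N))`. -/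
def extMap {n N : ℕ} (xstar : Fin N → (Fin n → ℝ) → (Fin n → ℝ))
    (z : Fin N × Fin n → ℝ) : Fin N × Fin n → ℝ :=
  fun p => xstar p.1 (fun j => z (p.1, j)) p.2

/-- Extended aggregation map `A_ν(z) = (P^ν ⊗ I_n) x⋆(z)`. -/
def aggMap {n N : ℕ} (P : Matrix (Fin N) (Fin N) ℝ) (ν : ℕ)
    (xstar : Fin N → (Fin n → ℝ) → (Fin n → ℝ)) (z : Fin N × Fin n → ℝ) :
    Fin N × Fin n → ℝ :=
  ((P ^ ν) ⊗ₖ (1 : Matrix (Fin n) (Fin n) ℝ)).mulVec (extMap xstar z)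

/-- The matrix `(1/N)·1_N 1_Nᵀ` with all entries `1/N`. -/
def avgMat (N : ℕ) : Matrix (Fin N) (Fin N) ℝ := Matrix.of fun _ _ => (N : ℝ)⁻¹

/-- Mean-field aggregation map `A(z) = ((1/N)·1 1ᵀ ⊗ I_n) x⋆(z)`. -/
def meanAgg {n N : ℕ} (xstar : Fin N → (Fin n → ℝ) → (Fin n → ℝ))
    (z : Fin N × Fin n → ℝ) : Fin N × Fin n → ℝ :=
  ((avgMat N) ⊗ₖ (1 : Matrix (Fin n) (Fin n) ℝ)).mulVec (extMap xstar z)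

/-- Maximum-row-sum matrix norm `‖A‖_∞`. -/
def rowSumNorm {N : ℕ} (A : Matrix (Fin N) (Fin N) ℝ) : ℝ := ⨆ i, ∑ j, |A i j|

/-- Spectral norm (ℓ²-operator norm) of a real matrix. -/
def specNorm {ι : Type*} [Fintype ι] [DecidableEq ι] (P : Matrix ι ι ℝ) : ℝ :=
  ‖LinearMap.toContinuousLinearMap (Matrix.toEuclideanLin P)‖

/-- Map `A_{m,m}(z) = (P^m ⊗ I_n) x⋆((P^m ⊗ I_n) z)`. -/
def halfAgg {n N : ℕ} (P : Matrix (Fin N) (Fin N) ℝ) (m : ℕ)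
    (xstar : Fin N → (Fin n → ℝ) → (Fin n → ℝ)) (z : Fin N × Fin n → ℝ) :
    Fin N × Fin n → ℝ :=
  ((P ^ m) ⊗ₖ (1 : Matrix (Fin n) (Fin n) ℝ)).mulVec
    (extMap xstar (((P ^ m) ⊗ₖ (1 : Matrix (Fin n) (Fin n) ℝ)).mulVec z))


section ContractionHelpers

private lemma dot_self_nonneg' {ι : Type*} [Fintype ι] (x : ι → ℝ) : 0 ≤ x ⬝ᵥ x :=
  Finset.sum_nonneg fun _ _ => mul_self_nonneg _

private lemma dot_mulVec_swap {ι : Type*} [Fintype ι] (A : Matrix ι ι ℝ) (x y : ι → ℝ) :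
    x ⬝ᵥ A.mulVec y = y ⬝ᵥ Aᵀ.mulVec x := by
  rw [Matrix.dotProduct_mulVec, ← Matrix.mulVec_transpose, dotProduct_comm]

private lemma dot_symm {ι : Type*} [Fintype ι] {Q : Matrix ι ι ℝ} (hQ : Qᵀ = Q)
    (a b : ι → ℝ) : a ⬝ᵥ Q.mulVec b = b ⬝ᵥ Q.mulVec a := by
  rw [dot_mulVec_swap, hQ]

private lemma quad_upper {ι : Type*} [Fintype ι] (A : Matrix ι ι ℝ) :
    ∃ k : ℝ, 0 < k ∧ ∀ x : ι → ℝ, x ⬝ᵥ A.mulVec x ≤ k * (x ⬝ᵥ x) := by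
  refine ⟨(∑ i, ∑ j, |A i j|) + 1, by positivity, fun x => ?_⟩
  have hxx := dot_self_nonneg' x
  have hterm : ∀ i j : ι, x i * (A i j * x j) ≤ |A i j| * (x ⬝ᵥ x) := by
    intro i j
    have hi : x i * x i ≤ x ⬝ᵥ x :=
      Finset.single_le_sum (f := fun k => x k * x k)
        (fun k _ => mul_self_nonneg _) (Finset.mem_univ i)
    have hj : x j * x j ≤ x ⬝ᵥ x :=
      Finset.single_le_sum (f := fun k => x k * x k)
        (fun k _ => mul_self_nonneg _) (Finset.mem_univ j)
    have h1 : x i * (A i j * x j) ≤ |A i j| * (|x i| * |x j|) := by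
      calc x i * (A i j * x j) ≤ |x i * (A i j * x j)| := le_abs_self _
      _ = |A i j| * (|x i| * |x j|) := by rw [abs_mul, abs_mul]; ring
    have h2 : |x i| * |x j| ≤ x ⬝ᵥ x := by
      nlinarith [sq_nonneg (|x i| - |x j|), abs_nonneg (x i), abs_nonneg (x j),
        abs_mul_abs_self (x i), abs_mul_abs_self (x j)]
    calc x i * (A i j * x j) ≤ |A i j| * (|x i| * |x j|) := h1
    _ ≤ |A i j| * (x ⬝ᵥ x) := mul_le_mul_of_nonneg_left h2 (abs_nonneg _)
  have expand : x ⬝ᵥ A.mulVec x = ∑ i, ∑ j, x i * (A i j * x j) := by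
    simp [dotProduct, Matrix.mulVec, Finset.mul_sum]
  rw [expand]
  calc ∑ i, ∑ j, x i * (A i j * x j) ≤ ∑ i, ∑ j, |A i j| * (x ⬝ᵥ x) :=
        Finset.sum_le_sum fun i _ => Finset.sum_le_sum fun j _ => hterm i j
  _ = (∑ i, ∑ j, |A i j|) * (x ⬝ᵥ x) := by
      rw [Finset.sum_mul]; congr 1; ext i; rw [Finset.sum_mul]
  _ ≤ ((∑ i, ∑ j, |A i j|) + 1) * (x ⬝ᵥ x) := by nlinarith

private lemma quad_continuous {ι : Type*} [Fintype ι] (M : Matrix ι ι ℝ) :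
    Continuous fun x : ι → ℝ => x ⬝ᵥ M.mulVec x := by
  have : (fun x : ι → ℝ => x ⬝ᵥ M.mulVec x)
      = fun x : ι → ℝ => ∑ i, x i * ∑ j, M i j * x j := by
    funext x; simp [dotProduct, Matrix.mulVec]
  rw [this]
  exact continuous_finset_sum _ fun i _ =>
    (continuous_apply i).mul (continuous_finset_sum _ fun j _ =>
      continuous_const.mul (continuous_apply j))

private lemma posdef_coercive {ι : Type*} [Fintype ι] [DecidableEq ι]
    {M : Matrix ι ι ℝ} (hM : M.PosDef) :
    ∃ lam : ℝ, 0 < lam ∧ ∀ x : ι → ℝ, lam * (x ⬝ᵥ x) ≤ x ⬝ᵥ M.mulVec x := by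
  have hMd : ∀ x : ι → ℝ, x ≠ 0 → 0 < x ⬝ᵥ M.mulVec x := by
    intro x hx; simpa using hM.dotProduct_mulVec_pos hx
  rcases isEmpty_or_nonempty ι with h | h
  · exact ⟨1, one_pos, fun x => by simp [dotProduct]⟩
  · set S : Set (ι → ℝ) := {x | x ⬝ᵥ x = 1} with hS
    have hgc : Continuous fun x : ι → ℝ => x ⬝ᵥ x := by
      have : (fun x : ι → ℝ => x ⬝ᵥ x) = fun x : ι → ℝ => ∑ i, x i * x i := by
        funext x; simp [dotProduct]
      rw [this]
      exact continuous_finset_sum _ fun i _ => (continuous_apply i).mul (continuous_apply i)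
    have hclosed : IsClosed S := isClosed_eq hgc continuous_const
    have hbdd : Bornology.IsBounded S := by
      apply Bornology.IsBounded.subset (Metric.isBounded_closedBall (x := (0 : ι → ℝ)) (r := 1))
      intro x hx
      simp only [Metric.mem_closedBall, dist_zero_right]
      rw [pi_norm_le_iff_of_nonneg zero_le_one]
      intro i
      have hi : x i * x i ≤ 1 := by
        have := Finset.single_le_sum (f := fun k => x k * x k)
          (fun k _ => mul_self_nonneg _) (Finset.mem_univ i)
        simpa [hx.out] using this.trans_eq hx.out
      have h2 : |x i| * |x i| ≤ 1 := by rwa [abs_mul_abs_self]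
      rw [Real.norm_eq_abs]
      nlinarith [abs_nonneg (x i)]
    have hcpt : IsCompact S := Metric.isCompact_of_isClosed_isBounded hclosed hbdd
    have hne : S.Nonempty := by
      obtain ⟨i0⟩ := h
      refine ⟨Pi.single i0 1, ?_⟩
      simp [hS, dotProduct, Pi.single_apply]
    obtain ⟨x0, hx0S, hx0min⟩ := hcpt.exists_isMinOn hne (quad_continuous M).continuousOn
    have hx0ne : x0 ≠ 0 := by
      intro h0
      rw [h0] at hx0S
      simp [hS, dotProduct] at hx0S
    refine ⟨x0 ⬝ᵥ M.mulVec x0, hMd x0 hx0ne, fun x => ?_⟩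
    by_cases hxz : x ⬝ᵥ x = 0
    · have : x = 0 := dotProduct_self_eq_zero.mp hxz
      simp [this, hxz]
    · have hs : 0 < x ⬝ᵥ x := lt_of_le_of_ne (dot_self_nonneg' x) (Ne.symm hxz)
      set a : ℝ := (Real.sqrt (x ⬝ᵥ x))⁻¹ with ha
      have hsq : Real.sqrt (x ⬝ᵥ x) * Real.sqrt (x ⬝ᵥ x) = x ⬝ᵥ x :=
        Real.mul_self_sqrt (le_of_lt hs)
      have hsqpos : 0 < Real.sqrt (x ⬝ᵥ x) := Real.sqrt_pos.mpr hs
      have haa : a * a * (x ⬝ᵥ x) = 1 := by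
          rw [ha, ← mul_inv, hsq]; exact inv_mul_cancel₀ hs.ne'
      have hu : (a • x) ⬝ᵥ (a • x) = 1 := by
        rw [smul_dotProduct, dotProduct_smul, smul_eq_mul, smul_eq_mul, ← mul_assoc, haa]
      have humem : (a • x) ∈ S := hu
      have hle := hx0min humem
      have hexp : (a • x) ⬝ᵥ M.mulVec (a • x) = a * a * (x ⬝ᵥ M.mulVec x) := by
        rw [Matrix.mulVec_smul, smul_dotProduct, dotProduct_smul, smul_eq_mul, smul_eq_mul,
          ← mul_assoc]
      have hthis : x0 ⬝ᵥ M.mulVec x0 ≤ a * a * (x ⬝ᵥ M.mulVec x) := by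
        simpa [hexp] using hle
      have haainv : a * a = (x ⬝ᵥ x)⁻¹ := by rw [ha, ← mul_inv, hsq]
      rw [haainv, ← div_eq_inv_mul] at hthis
      have := (le_div_iff₀ hs).mp hthis
      linarith

private lemma opt_vi {n : ℕ} {X : Set (Fin n → ℝ)} (hconv : Convex ℝ X)
    {Q C : Matrix (Fin n) (Fin n) ℝ} (hQsym : Qᵀ = Q)
    (hQpsd : ∀ v : Fin n → ℝ, 0 ≤ v ⬝ᵥ Q.mulVec v)
    {q : ℝ} (hq : 0 < q) {c : Fin n → ℝ}
    {xstar : (Fin n → ℝ) → (Fin n → ℝ)} (hx : IsOptResp X Q C q c xstar)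
    (z : Fin n → ℝ) {y : Fin n → ℝ} (hy : y ∈ X) :
    0 ≤ (q • (Q.mulVec (xstar z)) + (C.mulVec z + c)) ⬝ᵥ (y - xstar z) := by
  set x := xstar z with hxz
  set h := y - x with hh
  set L : ℝ := (q • (Q.mulVec x) + (C.mulVec z + c)) ⬝ᵥ h with hL
  set K : ℝ := h ⬝ᵥ Q.mulVec h with hK
  have hK0 : 0 ≤ K := hQpsd h
  have hmem : ∀ t : ℝ, 0 < t → t ≤ 1 → x + t • h ∈ X := by
    intro t ht0 ht1
    have := hconv (hx z).1 hy (by linarith : (0:ℝ) ≤ 1 - t) (le_of_lt ht0) (by ring)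
    have heq : (1 - t) • x + t • y = x + t • h := by
      rw [hh]; module
    rwa [heq] at this
  have hexp : ∀ t : ℝ, cost Q C q c (x + t • h) z
      = cost Q C q c x z + 2 * t * L + t ^ 2 * q * K := by
    intro t
    simp only [cost, hL, hK, Matrix.mulVec_add, Matrix.mulVec_smul, dotProduct_add,
      add_dotProduct, dotProduct_smul, smul_dotProduct, smul_eq_mul]
    linear_combination q * t * dot_symm hQsym x (y - x)
      - 2 * q * t * dotProduct_comm (Q.mulVec x) (y - x)
  have hopt : ∀ t : ℝ, 0 < t → t ≤ 1 → 0 ≤ 2 * t * L + t ^ 2 * q * K := by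
    intro t ht0 ht1
    have := (hx z).2 _ (hmem t ht0 ht1)
    rw [hexp t] at this
    linarith
  by_contra hneg
  push_neg at hneg
  have hqK1 : 0 < q * K + 1 := by nlinarith
  set t : ℝ := min 1 (-L / (q * K + 1)) with ht
  have ht0 : 0 < t := lt_min one_pos (div_pos (by linarith) hqK1)
  have ht1 : t ≤ 1 := min_le_left _ _
  have htle : t ≤ -L / (q * K + 1) := min_le_right _ _
  have htqK : t * (q * K + 1) ≤ -L := by
    rw [div_eq_inv_mul] at htle
    calc t * (q * K + 1) ≤ (q * K + 1)⁻¹ * -L * (q * K + 1) :=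
          mul_le_mul_of_nonneg_right htle (le_of_lt hqK1)
    _ = -L := by field_simp
  have key := hopt t ht0 ht1
  nlinarith [mul_pos ht0 ht0, sq_nonneg t]

end ContractionHelpers

/-- Lemma 6, statement 1: if `M = [[qQ, −C],[−Cᵀ, qQ]] ≻ 0`, then the
constrained minimizer `x⋆` is a contraction in the `Q`-norm. -/
theorem optResp_contraction {n : ℕ} (hn : 0 < n)
    (X : Set (Fin n → ℝ)) (hne : X.Nonempty)
    (hconv : Convex ℝ X) (hcpt : IsCompact X)
    (Q : Matrix (Fin n) (Fin n) ℝ) (hQ : Q.PosDef) (q : ℝ) (hq : 0 < q)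
    (C : Matrix (Fin n) (Fin n) ℝ) (c : Fin n → ℝ)
    (xstar : (Fin n → ℝ) → (Fin n → ℝ))
    (hxstar : IsOptResp X Q C q c xstar)
    (hM : (Matrix.fromBlocks (q • Q) (-C) (-Cᵀ) (q • Q)).PosDef) :
    ∃ ε : ℝ, 0 < ε ∧ ε ≤ 1 ∧
      ∀ v w : Fin n → ℝ,
        wnorm Q (xstar v - xstar w) ≤ (1 - ε) * wnorm Q (v - w) := by
  classical
  have hQsym : Qᵀ = Q := hQ.1
  have hQpsd : ∀ v : Fin n → ℝ, 0 ≤ v ⬝ᵥ Q.mulVec v := by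
    intro v; simpa using hQ.posSemidef.dotProduct_mulVec_nonneg v
  obtain ⟨k, hk, hkQ⟩ := quad_upper Q
  obtain ⟨lam, hlam, hlamM⟩ := posdef_coercive hM
  -- the cross-term bound
  have hbound : ∀ a b : Fin n → ℝ,
      2 * (a ⬝ᵥ C.mulVec b) ≤ (q - lam / k) * (a ⬝ᵥ Q.mulVec a + b ⬝ᵥ Q.mulVec b) := by
    intro a b
    have hz := hlamM (Sum.elim a b)
    have hzz : (Sum.elim a b : Fin n ⊕ Fin n → ℝ) ⬝ᵥ Sum.elim a b = a ⬝ᵥ a + b ⬝ᵥ b := by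
      rw [Matrix.dotProduct_block]; simp
    have hMz : (Sum.elim a b : Fin n ⊕ Fin n → ℝ) ⬝ᵥ
        (Matrix.fromBlocks (q • Q) (-C) (-Cᵀ) (q • Q)).mulVec (Sum.elim a b)
        = q * (a ⬝ᵥ Q.mulVec a) + q * (b ⬝ᵥ Q.mulVec b) - 2 * (a ⬝ᵥ C.mulVec b) := by
      rw [Matrix.fromBlocks_mulVec, Matrix.dotProduct_block]
      simp only [Sum.elim_comp_inl, Sum.elim_comp_inr, Sum.elim_inl, Sum.elim_inr,
        Matrix.neg_mulVec, Matrix.smul_mulVec, dotProduct_add, dotProduct_neg,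
        dotProduct_smul, smul_eq_mul]
      have hswap : b ⬝ᵥ Cᵀ.mulVec a = a ⬝ᵥ C.mulVec b := by
        rw [dot_mulVec_swap, Matrix.transpose_transpose]
      linarith [hswap]
    rw [hzz, hMz] at hz
    have haQ : a ⬝ᵥ Q.mulVec a ≤ k * (a ⬝ᵥ a) := hkQ a
    have hbQ : b ⬝ᵥ Q.mulVec b ≤ k * (b ⬝ᵥ b) := hkQ b
    have h1 : lam / k * (a ⬝ᵥ Q.mulVec a + b ⬝ᵥ Q.mulVec b) ≤ lam * (a ⬝ᵥ a + b ⬝ᵥ b) := by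
      rw [div_mul_eq_mul_div, div_le_iff₀ hk]
      nlinarith
    nlinarith
  set δ : ℝ := lam / k with hδ
  have hδpos : 0 < δ := div_pos hlam hk
  refine ⟨min (δ / q) 1, lt_min (div_pos hδpos hq) one_pos, min_le_right _ _, fun v w => ?_⟩
  set ε : ℝ := min (δ / q) 1 with hε
  have hε1 : ε ≤ 1 := min_le_right _ _
  have hεδq : ε ≤ δ / q := min_le_left _ _
  set d : Fin n → ℝ := xstar v - xstar w with hd
  set e : Fin n → ℝ := v - w with he
  set α : ℝ := wnorm Q d with hα
  set β : ℝ := wnorm Q e with hβ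
  have hα0 : 0 ≤ α := Real.sqrt_nonneg _
  have hβ0 : 0 ≤ β := Real.sqrt_nonneg _
  have hα2 : α ^ 2 = d ⬝ᵥ Q.mulVec d := Real.sq_sqrt (hQpsd d)
  have hβ2 : β ^ 2 = e ⬝ᵥ Q.mulVec e := Real.sq_sqrt (hQpsd e)
  set c0 : ℝ := d ⬝ᵥ C.mulVec e with hc0
  -- combined variational inequality
  have key : q * α ^ 2 + c0 ≤ 0 := by
    have h1 := opt_vi hconv hQsym hQpsd hq hxstar v (hxstar w).1
    have h2 := opt_vi hconv hQsym hQpsd hq hxstar w (hxstar v).1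
    have hcomb : (q • (Q.mulVec (xstar v)) + (C.mulVec v + c)) ⬝ᵥ (xstar w - xstar v)
        + (q • (Q.mulVec (xstar w)) + (C.mulVec w + c)) ⬝ᵥ (xstar v - xstar w)
        = -(q * (d ⬝ᵥ Q.mulVec d) + d ⬝ᵥ C.mulVec e) := by
      simp only [hd, he, Matrix.mulVec_sub, dotProduct_sub, sub_dotProduct,
        add_dotProduct, dotProduct_add, smul_dotProduct, smul_eq_mul]
      linear_combination
        q * dotProduct_comm (Q.mulVec (xstar v)) (xstar w)
        - q * dotProduct_comm (Q.mulVec (xstar v)) (xstar v)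
        + q * dotProduct_comm (Q.mulVec (xstar w)) (xstar v)
        - q * dotProduct_comm (Q.mulVec (xstar w)) (xstar w)
        + dotProduct_comm (C.mulVec v) (xstar w)
        - dotProduct_comm (C.mulVec v) (xstar v)
        + dotProduct_comm (C.mulVec w) (xstar v)
        - dotProduct_comm (C.mulVec w) (xstar w)
    rw [hα2]
    have := hcomb ▸ add_nonneg h1 h2
    linarith [this]
  -- scaled cross-term bound
  have hF : ∀ t : ℝ, 2 * t * c0 ≤ (q - δ) * (α ^ 2 + t ^ 2 * β ^ 2) := by
    intro t
    have := hbound d (t • e)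
    have hce : d ⬝ᵥ C.mulVec (t • e) = t * c0 := by
      rw [Matrix.mulVec_smul, dotProduct_smul, smul_eq_mul, hc0]
    have hte : (t • e) ⬝ᵥ Q.mulVec (t • e) = t ^ 2 * (e ⬝ᵥ Q.mulVec e) := by
      rw [Matrix.mulVec_smul, smul_dotProduct, dotProduct_smul, smul_eq_mul, smul_eq_mul]
      ring
    rw [hce, hte] at this
    rw [hα2, hβ2]
    linarith [this]
  -- conclude
  rcases eq_or_lt_of_le hα0 with hαz | hαpos
  · rw [← hαz]
    have : 0 ≤ (1 - ε) * β := mul_nonneg (by linarith) hβ0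
    linarith
  · have hβpos : 0 < β := by
      rcases eq_or_lt_of_le hβ0 with hβz | h
      · exfalso
        set s : ℝ := (|q - δ| + 1) / (2 * q) with hs
        have hspos : 0 < s := by positivity
        have h2sq : 2 * s * q = |q - δ| + 1 := by
          rw [hs]; field_simp
        have hf := hF (-s)
        rw [← hβz] at hf
        have habs : q - δ ≤ |q - δ| := le_abs_self _
        nlinarith [mul_pos hαpos hαpos, mul_pos hspos hq, sq_nonneg α]
      · exact h
    have h5 : q * α ≤ (q - δ) * β := by
      have hb := hbound (β • d) ((-α) • e)
      have hce : (β • d) ⬝ᵥ C.mulVec ((-α) • e) = β * (-α) * c0 := by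
        rw [Matrix.mulVec_smul, smul_dotProduct, dotProduct_smul, smul_eq_mul, smul_eq_mul,
          hc0]; ring
      have hq1 : (β • d) ⬝ᵥ Q.mulVec (β • d) = β ^ 2 * α ^ 2 := by
        rw [Matrix.mulVec_smul, smul_dotProduct, dotProduct_smul, smul_eq_mul, smul_eq_mul,
          hα2]; ring
      have hq2 : ((-α) • e) ⬝ᵥ Q.mulVec ((-α) • e) = α ^ 2 * β ^ 2 := by
        rw [Matrix.mulVec_smul, smul_dotProduct, dotProduct_smul, smul_eq_mul, smul_eq_mul,
          hβ2]; ring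
      rw [hce, hq1, hq2] at hb
      have hkey2 : 2 * (α * β) * c0 ≤ 2 * (α * β) * (-(q * α ^ 2)) :=
        mul_le_mul_of_nonneg_left (by linarith [key]) (by positivity)
      have hgoal : 2 * (α * α * β) * (q * α) ≤ 2 * (α * α * β) * ((q - δ) * β) := by
        nlinarith [hb, hkey2]
      have hpos : 0 < 2 * (α * α * β) := by positivity
      exact le_of_mul_le_mul_left hgoal hpos
    -- ε ≤ δ/q gives q - δ ≤ q*(1-ε)
    have h8 : q - δ ≤ q * (1 - ε) := by
      have hq2 : ε * q ≤ δ := (le_div_iff₀ hq).mp hεδq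
      nlinarith [hq2]
    have h9 : q * α ≤ q * ((1 - ε) * β) := by
      calc q * α ≤ (q - δ) * β := h5
      _ ≤ q * (1 - ε) * β := mul_le_mul_of_nonneg_right h8 (le_of_lt hβpos)
      _ = q * ((1 - ε) * β) := by ring
    exact le_of_mul_le_mul_left h9 hq
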